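/- Let φ be a modal formula built from the single propositional variable p and the operations ¬ (general negation), ∧, and □. For each k, define the variable-free formula f_k(ψ) by: f_k(p) = ◇^{k+1}□false, f_k(¬ψ) = ¬f_k(ψ), f_k(ψ ∧ ξ) = f_k(ψ) ∧ f_k(ξ), and f_k(□ψ) = □(◇^k□false ∨ f_k(ψ)). Then φ is satisfiable with respect to the class of all frames if and only if the variable-free formula f_{md(φ)}(φ) is satisfiable with respect to the class of all frames. -/

import Mathlib

namespace PoorMansModal

/-- Modal formulas over propositional variables of type `α`: variables `p`,
negated variables `p̄`, general negation, conjunction, disjunction, box, diamond,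
and the constants `true` and `false`. -/
inductive Fml (α : Type) : Type where
  | var : α → Fml α
  | nvar : α → Fml α
  | neg : Fml α → Fml α
  | and : Fml α → Fml α → Fml α
  | or : Fml α → Fml α → Fml α
  | box : Fml α → Fml α
  | dia : Fml α → Fml α
  | tru : Fml α
  | fls : Fml α

/-- A Kripke model: a nonempty set of worlds, an accessibility relation, and a valuation. -/
structure Kripke (α : Type) where
  World : Type
  nonempty : Nonempty World
  R : World → World → Prop
  V : α → World → Prop

/-- Truth of a formula at a world of a model. -/
def Sat {α : Type} (M : Kripke α) : Fml α → M.World → Prop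
  | .var p, w => M.V p w
  | .nvar p, w => ¬ M.V p w
  | .neg φ, w => ¬ Sat M φ w
  | .and φ ψ, w => Sat M φ w ∧ Sat M ψ w
  | .or φ ψ, w => Sat M φ w ∨ Sat M ψ w
  | .box φ, w => ∀ v, M.R w v → Sat M φ v
  | .dia φ, w => ∃ v, M.R w v ∧ Sat M φ v
  | .tru, _ => True
  | .fls, _ => False

/-- Modal depth: depth of nesting of `□` and `◇`. -/
def mdep {α : Type} : Fml α → ℕ
  | .var _ => 0
  | .nvar _ => 0
  | .neg φ => mdep φ
  | .and φ ψ => max (mdep φ) (mdep ψ)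
  | .or φ ψ => max (mdep φ) (mdep ψ)
  | .box φ => mdep φ + 1
  | .dia φ => mdep φ + 1
  | .tru => 0
  | .fls => 0

/-- Conjunction of a list of formulas; the empty conjunction is the always-true formula. -/
def bigConj {α : Type} : List (Fml α) → Fml α
  | [] => .tru
  | [φ] => φ
  | φ :: rest => .and φ (bigConj rest)

/-- `□^k φ`. -/
def boxI {α : Type} : ℕ → Fml α → Fml α
  | 0, φ => φ
  | k + 1, φ => .box (boxI k φ)

/-- `◇^k φ`. -/
def diaI {α : Type} : ℕ → Fml α → Fml α
  | 0, φ => φ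
  | k + 1, φ => .dia (diaI k φ)

/-- `(◇□)^k φ`. -/
def diaBoxI {α : Type} : ℕ → Fml α → Fml α
  | 0, φ => φ
  | k + 1, φ => .dia (.box (diaBoxI k φ))

/-- The literal with variable `l.1` and sign `l.2` (`true` = positive). -/
def litF {α : Type} (l : α × Bool) : Fml α := if l.2 then .var l.1 else .nvar l.1

/-- The variable `p` occurs in the formula. -/
def occursV {α : Type} (p : α) : Fml α → Prop
  | .var q => p = q
  | .nvar q => p = q
  | .neg φ => occursV p φ
  | .and φ ψ => occursV p φ ∨ occursV p ψ
  | .or φ ψ => occursV p φ ∨ occursV p ψ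
  | .box φ => occursV p φ
  | .dia φ => occursV p φ
  | .tru => False
  | .fls => False

/-- Poor man's formulas: built from literals, `∧`, `□`, `◇` only. -/
def PoorF {α : Type} : Fml α → Prop
  | .var _ => True
  | .nvar _ => True
  | .and φ ψ => PoorF φ ∧ PoorF ψ
  | .box φ => PoorF φ
  | .dia φ => PoorF φ
  | _ => False

/-- Formulas of the language `L`: built from literals, `∧`, `∨`, `□`, `◇`. -/
def InL {α : Type} : Fml α → Prop
  | .var _ => True
  | .nvar _ => True
  | .and φ ψ => InL φ ∧ InL ψ
  | .or φ ψ => InL φ ∧ InL ψ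
  | .box φ => InL φ
  | .dia φ => InL φ
  | _ => False

/-- Every world has at most one successor. -/
def AtMostOne {W : Type} (R : W → W → Prop) : Prop :=
  ∀ w v v', R w v → R w v' → v = v'

/-- Every world has at least one successor. -/
def AtLeastOne {W : Type} (R : W → W → Prop) : Prop :=
  ∀ w, ∃ v, R w v

/-- Every world has at most two successors. -/
def AtMostTwo {W : Type} (R : W → W → Prop) : Prop :=
  ∀ w v₁ v₂ v₃, R w v₁ → R w v₂ → R w v₃ → v₁ = v₂ ∨ v₁ = v₃ ∨ v₂ = v₃

/-- `chainR R n w v`: there is an `R`-path of length exactly `n` from `w` to `v`. -/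
def chainR {W : Type} (R : W → W → Prop) : ℕ → W → W → Prop
  | 0, w, v => w = v
  | k + 1, w, v => ∃ u, R w u ∧ chainR R k u v

/-- `R` is the parent-child relation of a rooted tree with root `root`
in which every node has at most two children. -/
structure IsBinTree {W : Type} (R : W → W → Prop) (root : W) : Prop where
  reach : ∀ w, Relation.ReflTransGen R root w
  root_no_parent : ∀ w, ¬ R w root
  unique_parent : ∀ w v v', R v w → R v' w → v = v'
  acyclic : ∀ w, ¬ Relation.TransGen R w w
  at_most_two_children : ∀ w v₁ v₂ v₃, R w v₁ → R w v₂ → R w v₃ → v₁ = v₂ ∨ v₁ = v₃ ∨ v₂ = v₃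

/-- `φ_exp = ⋀_{i=1}^n □^{i-1}(◇□^{n-i} p_i ∧ ◇□^{n-i} p̄_i)`, with `p_i = var i`. -/
def phiExp (n : ℕ) : Fml ℕ :=
  bigConj ((List.range n).map (fun j =>
    boxI j (.and (.dia (boxI (n - 1 - j) (.var (j + 1))))
                 (.dia (boxI (n - 1 - j) (.nvar (j + 1)))))))

/-- Satisfiability with respect to the class of all frames. -/
def SatAll (φ : Fml ℕ) : Prop := ∃ (M : Kripke ℕ) (w : M.World), Sat M φ w

/-- Satisfiability with respect to `F≤1`. -/
def SatLe1 (φ : Fml ℕ) : Prop := ∃ M : Kripke ℕ, AtMostOne M.R ∧ ∃ w, Sat M φ w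

/-- Satisfiability with respect to `F≥1`. -/
def SatGe1 (φ : Fml ℕ) : Prop := ∃ M : Kripke ℕ, AtLeastOne M.R ∧ ∃ w, Sat M φ w

/-- Satisfiability with respect to `F≤2`. -/
def SatLe2 (φ : Fml ℕ) : Prop := ∃ M : Kripke ℕ, AtMostTwo M.R ∧ ∃ w, Sat M φ w

/-- A one-world model with no successors, realizing the boolean assignment `v`;
truth at its world is propositional truth for formulas without modal operators. -/
def propModel (v : ℕ → Bool) : Kripke ℕ :=
  { World := Unit, nonempty := ⟨()⟩, R := fun _ _ => False, V := fun p _ => v p = true }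

/-- Propositional satisfaction of `φ` under the assignment `v`. -/
def PropSat (v : ℕ → Bool) (φ : Fml ℕ) : Prop := Sat (propModel v) φ ()


/-- Formulas built from the single propositional variable `p` and the operations `¬`
(general negation), `∧`, and `□`. -/
def Frag19 (p : ℕ) : Fml ℕ → Prop
  | .var q => q = p
  | .neg φ => Frag19 p φ
  | .and φ ψ => Frag19 p φ ∧ Frag19 p ψ
  | .box φ => Frag19 p φ
  | _ => False

/-- The translation `f_k` into variable-free formulas:
`f_k(p) = ◇^{k+1} □ false`, `f_k(¬ψ) = ¬ f_k(ψ)`, `f_k(ψ ∧ ξ) = f_k(ψ) ∧ f_k(ξ)`, and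
`f_k(□ψ) = □(◇^k □ false ∨ f_k(ψ))`. -/
def fk (k : ℕ) : Fml ℕ → Fml ℕ
  | .var _ => diaI (k + 1) (.box .fls)
  | .neg φ => .neg (fk k φ)
  | .and φ ψ => .and (fk k φ) (fk k ψ)
  | .box φ => .box (.or (diaI k (.box .fls)) (fk k φ))
  | a => a

/-! ### Auxiliary development for statement 19 -/

lemma sat_diaI (M : Kripke ℕ) (ψ : Fml ℕ) :
    ∀ (m : ℕ) (x : M.World), Sat M (diaI m ψ) x ↔ ∃ y, chainR M.R m x y ∧ Sat M ψ y := by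
  intro m
  induction m with
  | zero => intro x; simp [diaI, chainR]
  | succ n ih =>
    intro x
    simp only [diaI, Sat, chainR]
    constructor
    · rintro ⟨v, hv, hs⟩
      obtain ⟨y, hc, hy⟩ := (ih v).1 hs
      exact ⟨y, ⟨v, hv, hc⟩, hy⟩
    · rintro ⟨y, ⟨v, hv, hc⟩, hy⟩
      exact ⟨v, hv, (ih v).2 ⟨y, hc, hy⟩⟩

/-- Accessibility of the forward model: genuine extensions of paths of length ≤ k,
a spine start when `p` holds at the last world of the path, and spine continuations. -/
def R' (M : Kripke ℕ) (p k : ℕ) (x y : List M.World × ℕ) : Prop :=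
  (x.2 = 0 ∧ y.2 = 0 ∧ x.1.length ≤ k ∧
    ∃ w v, x.1.getLast? = some w ∧ M.R w v ∧ y.1 = x.1 ++ [v]) ∨
  (x.2 = 0 ∧ y.2 = 1 ∧ y.1 = x.1 ∧ ∃ w, x.1.getLast? = some w ∧ M.V p w) ∨
  (1 ≤ x.2 ∧ x.2 ≤ k ∧ y.1 = x.1 ∧ y.2 = x.2 + 1)

def Mfwd (M : Kripke ℕ) (p k : ℕ) : Kripke ℕ :=
  { World := List M.World × ℕ, nonempty := ⟨([], 0)⟩, R := R' M p k, V := fun _ _ => False }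

/-- A dead end at distance exactly `m`. -/
def Ddist (M : Kripke ℕ) (p k m : ℕ) (x : List M.World × ℕ) : Prop :=
  ∃ y, chainR (R' M p k) m x y ∧ ∀ z, ¬ R' M p k y z

lemma sat_guard (M : Kripke ℕ) (p k m : ℕ) (x : List M.World × ℕ) :
    Sat (Mfwd M p k) (diaI m (.box .fls)) x ↔ Ddist M p k m x := by
  refine (sat_diaI (Mfwd M p k) _ m x).trans ?_
  unfold Ddist
  constructor <;> (rintro ⟨y, hc, hy⟩; refine ⟨y, hc, ?_⟩) <;>
    simpa [Sat, Mfwd] using hy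

lemma Ddist_succ (M : Kripke ℕ) (p k m : ℕ) (x : List M.World × ℕ) :
    Ddist M p k (m + 1) x ↔ ∃ z, R' M p k x z ∧ Ddist M p k m z := by
  unfold Ddist
  constructor
  · rintro ⟨y, ⟨u, hu, hc⟩, hy⟩
    exact ⟨u, hu, y, hc, hy⟩
  · rintro ⟨z, hz, y, hc, hy⟩
    exact ⟨y, ⟨z, hz, hc⟩, hy⟩

/-- Distance from spine node `(l, i)` (with `1 ≤ i ≤ k+1`) to a dead end is exactly
`k + 1 - i`. -/
lemma spineD (M : Kripke ℕ) (p k : ℕ) :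
    ∀ (m i : ℕ) (l : List M.World), 1 ≤ i → i ≤ k + 1 →
      (Ddist M p k m (l, i) ↔ i + m = k + 1) := by
  intro m
  induction m with
  | zero =>
    intro i l h1 h2
    unfold Ddist
    constructor
    · rintro ⟨y, hc, hy⟩
      simp only [chainR] at hc
      subst hc
      by_contra hne
      have hik : i ≤ k := by omega
      exact hy (l, i + 1) (Or.inr (Or.inr ⟨h1, hik, rfl, rfl⟩))
    · intro h
      refine ⟨(l, i), by simp [chainR], ?_⟩
      rintro z (⟨h0, _⟩ | ⟨h0, _⟩ | ⟨_, hik, _⟩) <;> omega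
  | succ n ih =>
    intro i l h1 h2
    rw [Ddist_succ]
    constructor
    · rintro ⟨z, hz, hd⟩
      rcases hz with ⟨h0, _⟩ | ⟨h0, _⟩ | ⟨_, hik, hzl, hzi⟩
      · omega
      · omega
      · have : z = (l, i + 1) := by
          rcases z with ⟨zl, zi⟩; simp at hzl hzi; simp [hzl, hzi]
        subst this
        have := (ih (i + 1) l (by omega) (by omega)).1 hd
        omega
    · intro h
      refine ⟨(l, i + 1), Or.inr (Or.inr ⟨h1, by omega, rfl, rfl⟩), ?_⟩
      exact (ih (i + 1) l (by omega) (by omega)).2 (by omega)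

lemma getLast?_ne_nil {α : Type} {l : List α} {w : α} (h : l.getLast? = some w) :
    1 ≤ l.length := by
  cases l with
  | nil => simp at h
  | cons a t => simp

/-- No spurious dead ends: characterization of dead-end distances from genuine nodes. -/
lemma Hlem (M : Kripke ℕ) (p k : ℕ) :
    ∀ (m : ℕ) (l : List M.World) (w : M.World), l.getLast? = some w →
      l.length ≤ k + 1 → Ddist M p k m (l, 0) →
      m + l.length ≤ k + 1 ∨ (k + 1 ≤ m ∧ (m = k + 1 → M.V p w)) := by
  intro m
  induction m with
  | zero => intro l w _ hlen _; left; omega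
  | succ n ih =>
    intro l w hw hlen hd
    rw [Ddist_succ] at hd
    obtain ⟨z, hz, hdz⟩ := hd
    rcases hz with ⟨_, hz0, hlk, w', v, hw', hR, hzl⟩ | ⟨_, hz1, hzl, w', hw', hV⟩ |
      ⟨h1, _⟩
    · have hzeq : z = (l ++ [v], 0) := by
        rcases z with ⟨zl, zi⟩; simp at hzl hz0; simp [hzl, hz0]
      subst hzeq
      have hlk2 : l.length ≤ k := hlk
      have hlast : (l ++ [v]).getLast? = some v := by simp
      have := ih (l ++ [v]) v hlast
        (by simp only [List.length_append, List.length_cons, List.length_nil]; omega) hdz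
      rcases this with h | ⟨h, _⟩
      · left
        simp only [List.length_append, List.length_cons, List.length_nil] at h
        omega
      · right; constructor
        · omega
        · intro he; omega
    · have hzeq : z = (l, 1) := by
        rcases z with ⟨zl, zi⟩; simp at hzl hz1; simp [hzl, hz1]
      subst hzeq
      have := (spineD M p k n 1 l le_rfl (by omega)).1 hdz
      right
      refine ⟨by omega, fun _ => ?_⟩
      rw [hw] at hw'
      cases hw'
      exact hV
    · simp at h1

/-- Main invariant for the forward direction. -/
lemma main_fwd (M : Kripke ℕ) (p k : ℕ) :
    ∀ ψ : Fml ℕ, Frag19 p ψ → ∀ (l : List M.World) (w : M.World),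
      l.getLast? = some w → mdep ψ + l.length ≤ k + 1 →
      (Sat M ψ w ↔ Sat (Mfwd M p k) (fk k ψ) (l, 0)) := by
  intro ψ
  induction ψ with
  | var q =>
    intro hfr l w hw hlen
    have hq : q = p := hfr
    have h1 : 1 ≤ l.length := getLast?_ne_nil hw
    show M.V q w ↔ Sat (Mfwd M p k) (diaI (k + 1) (.box .fls)) (l, 0)
    rw [hq, sat_guard]
    constructor
    · intro hV
      rw [Ddist_succ]
      refine ⟨(l, 1), Or.inr (Or.inl ⟨rfl, rfl, rfl, w, hw, hV⟩), ?_⟩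
      exact (spineD M p k k 1 l le_rfl (by omega)).2 (by omega)
    · intro hd
      have := Hlem M p k (k + 1) l w hw (by simp [mdep] at hlen; omega) hd
      rcases this with h | ⟨_, h⟩
      · omega
      · exact h rfl
  | nvar q => intro hfr; exact hfr.elim
  | neg ψ ih =>
    intro hfr l w hw hlen
    have := ih hfr l w hw (by simpa [mdep] using hlen)
    show (¬ Sat M ψ w) ↔ ¬ Sat (Mfwd M p k) (fk k ψ) (l, 0)
    exact not_congr this
  | and ψ ξ ih1 ih2 =>
    intro hfr l w hw hlen
    have h1 := ih1 hfr.1 l w hw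
      (le_trans (Nat.add_le_add_right (le_max_left _ _) _) hlen)
    have h2 := ih2 hfr.2 l w hw
      (le_trans (Nat.add_le_add_right (le_max_right _ _) _) hlen)
    show (Sat M ψ w ∧ Sat M ξ w) ↔ _ ∧ _
    exact and_congr h1 h2
  | or ψ ξ ih1 ih2 => intro hfr; exact hfr.elim
  | box ψ ih =>
    intro hfr l w hw hlen
    simp only [mdep] at hlen
    have hlk : l.length ≤ k := by omega
    have h1 : 1 ≤ l.length := getLast?_ne_nil hw
    show (∀ v, M.R w v → Sat M ψ v) ↔
      ∀ z, R' M p k (l, 0) z →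
        Sat (Mfwd M p k) (.or (diaI k (.box .fls)) (fk k ψ)) z
    constructor
    · intro hb z hz
      rcases hz with ⟨_, hz0, _, w', v, hw', hR, hzl⟩ | ⟨_, hz1, hzl, _⟩ | ⟨hx, _⟩
      · have hzeq : z = (l ++ [v], 0) := by
          rcases z with ⟨zl, zi⟩; simp at hzl hz0; simp [hzl, hz0]
        subst hzeq
        rw [hw] at hw'; cases hw'
        right
        exact (ih hfr (l ++ [v]) v (by simp)
          (by simp only [List.length_append, List.length_cons, List.length_nil]
              omega)).1 (hb v hR)
      · have hzeq : z = (l, 1) := by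
          rcases z with ⟨zl, zi⟩; simp at hzl hz1; simp [hzl, hz1]
        subst hzeq
        left
        rw [sat_guard]
        exact (spineD M p k k 1 l le_rfl (by omega)).2 (by omega)
      · simp at hx
    · intro hb v hR
      have hz : R' M p k (l, 0) (l ++ [v], 0) :=
        Or.inl ⟨rfl, rfl, hlk, w, v, hw, hR, rfl⟩
      rcases hb _ hz with hg | hs
      · exfalso
        rw [sat_guard] at hg
        have := Hlem M p k k (l ++ [v]) v (by simp)
          (by simp only [List.length_append, List.length_cons, List.length_nil]; omega) hg
        rcases this with h | ⟨h, _⟩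
        · simp only [List.length_append, List.length_cons, List.length_nil] at h
          omega
        · omega
      · exact (ih hfr (l ++ [v]) v (by simp)
          (by simp only [List.length_append, List.length_cons, List.length_nil]
              omega)).2 hs
  | tru => intro hfr; exact hfr.elim
  | fls => intro hfr; exact hfr.elim
  | dia ψ ih => intro hfr; exact hfr.elim

/-- Backward model: restrict accessibility to non-guard successors and read off `p`
from `◇^{k+1}□false`. -/
def Mback (N : Kripke ℕ) (k : ℕ) : Kripke ℕ :=
  { World := N.World, nonempty := N.nonempty,
    R := fun a b => N.R a b ∧ ¬ Sat N (diaI k (.box .fls)) b,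
    V := fun _ w => Sat N (diaI (k + 1) (.box .fls)) w }

lemma main_back (N : Kripke ℕ) (p k : ℕ) :
    ∀ ψ : Fml ℕ, Frag19 p ψ → ∀ w : N.World,
      (Sat (Mback N k) ψ w ↔ Sat N (fk k ψ) w) := by
  intro ψ
  induction ψ with
  | var q =>
    intro _ w
    show Sat N (diaI (k + 1) (.box .fls)) w ↔ Sat N (diaI (k + 1) (.box .fls)) w
    rfl
  | nvar q => intro hfr; exact hfr.elim
  | neg ψ ih =>
    intro hfr w
    exact not_congr (ih hfr w)
  | and ψ ξ ih1 ih2 =>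
    intro hfr w
    exact and_congr (ih1 hfr.1 w) (ih2 hfr.2 w)
  | or ψ ξ ih1 ih2 => intro hfr; exact hfr.elim
  | box ψ ih =>
    intro hfr w
    show (∀ v, (N.R w v ∧ ¬ Sat N (diaI k (.box .fls)) v) → Sat (Mback N k) ψ v) ↔
      ∀ v, N.R w v → Sat N (diaI k (.box .fls)) v ∨ Sat N (fk k ψ) v
    constructor
    · intro hb v hR
      by_cases hg : Sat N (diaI k (.box .fls)) v
      · exact Or.inl hg
      · exact Or.inr ((ih hfr v).1 (hb v ⟨hR, hg⟩))
    · rintro hb v ⟨hR, hg⟩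
      rcases hb v hR with h | h
      · exact absurd h hg
      · exact (ih hfr v).2 h
  | tru => intro hfr; exact hfr.elim
  | fls => intro hfr; exact hfr.elim
  | dia ψ ih => intro hfr; exact hfr.elim

/-- A modal formula `φ` built from the single propositional variable `p`
and `¬`, `∧`, `□` is satisfiable with respect to the class of all frames iff the
variable-free formula `f_{md(φ)}(φ)` is satisfiable with respect to the class of all
frames. -/
theorem stmt19 (p : ℕ) (φ : Fml ℕ) (hφ : Frag19 p φ) :
    SatAll φ ↔ SatAll (fk (mdep φ) φ) := by
  constructor
  · rintro ⟨M, w, hw⟩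
    refine ⟨Mfwd M p (mdep φ), ([w], 0), ?_⟩
    exact (main_fwd M p (mdep φ) φ hφ [w] w (by simp) (by simp)).1 hw
  · rintro ⟨N, w, hw⟩
    exact ⟨Mback N (mdep φ), w, (main_back N p (mdep φ) φ hφ w).2 hw⟩

end PoorMansModal
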